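/- Let (Ω, 𝓕, P) be a probability space, let (𝓕_t)_{t=0}^{n} be a filtration, let A_1, …, A_n be events with A_t ∈ 𝓕_t for each t, and let p₀ ∈ [0, 1] be such that for every t ∈ {1, …, n}, E[1_{A_t} ∣ 𝓕_{t−1}] ≤ p₀ almost surely. Then for every λ ≥ 0, E[ exp( λ · ∑_{t=1}^{n} 1_{A_t} ) ] ≤ (1 − p₀ + p₀·e^{λ})^{n}. -/

import Mathlib

open MeasureTheory

/-- Moment generating function bound on the number of bad rounds: if each event `A t` is
`𝓕 t`-measurable and has conditional probability at most `p₀` given `𝓕 (t−1)`, then for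
every `λ ≥ 0`, `E[exp(λ · ∑ 1_{A t})] ≤ (1 − p₀ + p₀ e^λ)^n`. -/
theorem mgf_bad_rounds
    {Ω : Type*} [m0 : MeasurableSpace Ω] (P : Measure Ω) [IsProbabilityMeasure P]
    (n : ℕ) (hn : 1 ≤ n) (ℱ : Filtration ℕ m0) (A : ℕ → Set Ω)
    (hA : ∀ t, 1 ≤ t → t ≤ n → MeasurableSet[ℱ t] (A t))
    (p0 : ℝ) (hp0 : p0 ∈ Set.Icc (0 : ℝ) 1)
    (hcond : ∀ t, 1 ≤ t → t ≤ n →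
      ∀ᵐ ω ∂P, (MeasureTheory.condExp (ℱ (t - 1)) P
        ((A t).indicator (fun _ => (1 : ℝ)))) ω ≤ p0)
    (l : ℝ) (hl : 0 ≤ l) :
    ∫ ω, Real.exp (l * ∑ t ∈ Finset.Icc 1 n, (A t).indicator (fun _ => (1 : ℝ)) ω) ∂P ≤
      (1 - p0 + p0 * Real.exp l) ^ n := by
  have hel : (1 : ℝ) ≤ Real.exp l := Real.one_le_exp hl
  set c : ℝ := 1 - p0 + p0 * Real.exp l with hc
  have hc1 : (1 : ℝ) ≤ c := by nlinarith [hp0.1, hp0.2]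
  have hc0 : (0 : ℝ) ≤ c := by linarith
  have key : ∀ k, k ≤ n →
      (∫ ω, Real.exp (l * ∑ t ∈ Finset.Icc 1 k,
        (A t).indicator (fun _ => (1 : ℝ)) ω) ∂P) ≤ c ^ k := by
    intro k
    induction k with
    | zero => intro _; simp
    | succ k ih =>
      intro hk1
      have hkn : k ≤ n := le_trans (Nat.le_succ k) hk1
      have ihk := ih hkn
      set S : Ω → ℝ := fun ω => ∑ t ∈ Finset.Icc 1 k,
        (A t).indicator (fun _ => (1 : ℝ)) ω with hS
      set f : Ω → ℝ := fun ω => Real.exp (l * S ω) with hf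
      set g : Ω → ℝ := (A (k + 1)).indicator (fun _ => (1 : ℝ)) with hg
      -- measurability of S and f with respect to ℱ k
      have hSmeas : Measurable[ℱ k] S := by
        apply Finset.measurable_sum
        intro t ht
        simp only [Finset.mem_Icc] at ht
        exact measurable_const.indicator ((ℱ.mono ht.2 _) (hA t ht.1 (le_trans ht.2 hkn)))
      have hfsm : StronglyMeasurable[ℱ k] f :=
        ((hSmeas.const_mul l).exp).stronglyMeasurable
      have hfmeas : Measurable f :=
        ((hSmeas.mono (ℱ.le k) le_rfl).const_mul l).exp
      -- bounds on S and f
      have hSnn : ∀ ω, 0 ≤ S ω := fun ω =>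
        Finset.sum_nonneg fun t _ => Set.indicator_nonneg (fun _ _ => zero_le_one) ω
      have hSle : ∀ ω, S ω ≤ (k : ℝ) := by
        intro ω
        calc S ω ≤ ∑ t ∈ Finset.Icc 1 k, (1 : ℝ) :=
              Finset.sum_le_sum fun t _ => Set.indicator_le_self' (fun _ _ => zero_le_one) ω
          _ = (k : ℝ) := by simp
      have hfpos : ∀ ω, 0 < f ω := fun ω => Real.exp_pos _
      have hfbound : ∀ ω, ‖f ω‖ ≤ Real.exp (l * k) := by
        intro ω
        rw [Real.norm_eq_abs, abs_of_pos (hfpos ω)]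
        exact Real.exp_le_exp.2 (mul_le_mul_of_nonneg_left (hSle ω) hl)
      have hf_int : Integrable f P :=
        (integrable_const (Real.exp (l * k))).mono' hfmeas.aestronglyMeasurable
          (Filter.Eventually.of_forall hfbound)
      -- g facts
      have hAk : MeasurableSet (A (k + 1)) :=
        (ℱ.le (k + 1)) _ (hA (k + 1) (Nat.succ_le_succ (Nat.zero_le k)) hk1)
      have hgmeas : Measurable g := measurable_const.indicator hAk
      have hg01 : ∀ ω, 0 ≤ g ω ∧ g ω ≤ 1 := fun ω =>
        ⟨Set.indicator_nonneg (fun _ _ => zero_le_one) ω,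
         Set.indicator_le_self' (fun _ _ => zero_le_one) ω⟩
      have hg_int : Integrable g P :=
        (integrable_const (1 : ℝ)).mono' hgmeas.aestronglyMeasurable
          (Filter.Eventually.of_forall fun ω => by
            rw [Real.norm_eq_abs, abs_of_nonneg (hg01 ω).1]; exact (hg01 ω).2)
      have hfg_int : Integrable (f * g) P :=
        (integrable_const (Real.exp (l * k))).mono'
          (hfmeas.mul hgmeas).aestronglyMeasurable
          (Filter.Eventually.of_forall fun ω => by
            simp only [Pi.mul_apply, Real.norm_eq_abs, abs_mul,
              abs_of_pos (hfpos ω), abs_of_nonneg (hg01 ω).1]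
            calc f ω * g ω ≤ f ω * 1 :=
                  mul_le_mul_of_nonneg_left (hg01 ω).2 (hfpos ω).le
              _ = f ω := mul_one _
              _ ≤ Real.exp (l * k) := le_trans (le_abs_self _) (hfbound ω))
      -- pull-out property: ∫ f * g ≤ p0 * ∫ f
      have hpull : P[f * g | ℱ k] =ᵐ[P] f * P[g | ℱ k] :=
        condExp_mul_of_stronglyMeasurable_left hfsm hfg_int hg_int
      have hcond' : ∀ᵐ ω ∂P, (P[g | ℱ k]) ω ≤ p0 := by
        have := hcond (k + 1) (Nat.succ_le_succ (Nat.zero_le k)) hk1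
        simpa using this
      have hfcond_int : Integrable (f * P[g | ℱ k]) P :=
        (integrable_condExp (f := f * g)).congr hpull
      have hstep : ∫ ω, (f * g) ω ∂P ≤ p0 * ∫ ω, f ω ∂P := by
        calc ∫ ω, (f * g) ω ∂P = ∫ ω, (P[f * g | ℱ k]) ω ∂P :=
              (integral_condExp (ℱ.le k)).symm
          _ = ∫ ω, (f * P[g | ℱ k]) ω ∂P := integral_congr_ae hpull
          _ ≤ ∫ ω, p0 * f ω ∂P := by
              apply integral_mono_ae hfcond_int (hf_int.const_mul p0)
              filter_upwards [hcond'] with ω hω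
              simp only [Pi.mul_apply]
              rw [mul_comm p0 (f ω)]
              exact mul_le_mul_of_nonneg_left hω (hfpos ω).le
          _ = p0 * ∫ ω, f ω ∂P := integral_const_mul p0 f
      simp only [Pi.mul_apply] at hstep
      have hfg_int' : Integrable (fun ω => f ω * g ω) P := hfg_int
      -- rewrite the (k+1)-integrand
      have hrw : ∀ ω, Real.exp (l * ∑ t ∈ Finset.Icc 1 (k + 1),
          (A t).indicator (fun _ => (1 : ℝ)) ω)
          = f ω + (Real.exp l - 1) * (f ω * g ω) := by
        intro ω
        rw [Finset.sum_Icc_succ_top (Nat.succ_le_succ (Nat.zero_le k)), mul_add,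
          Real.exp_add]
        have hgval : Real.exp (l * g ω) = 1 + (Real.exp l - 1) * g ω := by
          by_cases h : ω ∈ A (k + 1) <;>
            simp [hg, Set.indicator_of_mem, Set.indicator_of_notMem, h]
        rw [hgval]
        ring
      -- integral of f is nonnegative
      have hfint_nn : 0 ≤ ∫ ω, f ω ∂P :=
        integral_nonneg fun ω => (hfpos ω).le
      calc ∫ ω, Real.exp (l * ∑ t ∈ Finset.Icc 1 (k + 1),
            (A t).indicator (fun _ => (1 : ℝ)) ω) ∂P
          = ∫ ω, (f ω + (Real.exp l - 1) * (f ω * g ω)) ∂P := by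
            apply integral_congr_ae
            exact Filter.Eventually.of_forall hrw
        _ = (∫ ω, f ω ∂P) + (Real.exp l - 1) * ∫ ω, f ω * g ω ∂P := by
            rw [integral_add hf_int (hfg_int'.const_mul _), integral_const_mul]
        _ ≤ (∫ ω, f ω ∂P) + (Real.exp l - 1) * (p0 * ∫ ω, f ω ∂P) := by
            have := mul_le_mul_of_nonneg_left hstep (by linarith : (0:ℝ) ≤ Real.exp l - 1)
            linarith
        _ = c * ∫ ω, f ω ∂P := by rw [hc]; ring
        _ ≤ c * c ^ k := mul_le_mul_of_nonneg_left ihk hc0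
        _ = c ^ (k + 1) := (pow_succ' c k).symm
  exact key n le_rfl
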